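/- Let ψ : Fin 4 × Fin 4 → Fin 8 be a function each of whose fibers ψ⁻¹{i} has exactly two elements. Then there exist pairwise distinct i₀, i₁, i₂ < 8 such that, writing F_j = ψ⁻¹{i_j} and U = F_{i₀} ∪ F_{i₁} ∪ F_{i₂}: (1) there are no pairs p₀ ∈ F_{i₀}, p₁ ∈ F_{i₁}, p₂ ∈ F_{i₂} all having the same first coordinate or all having the same second coordinate; and (2) there are no a₀ ≠ a₁ and b₀ ≠ b₁ in Fin 4 such that all four pairs (a₀,b₀), (a₀,b₁), (a₁,b₀), (a₁,b₁) lie in U with each of F_{i₀}, F_{i₁}, F_{i₂} containing at least one of them. (Hence some collection of three fibers of ψ is not bad.) -/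

import Mathlib

namespace Stmt5Aux

open Finset

abbrev Cell := Fin 4 × Fin 4

def P2 : Finset (Finset (Fin 4)) := Finset.powersetCard 2 univ

lemma g3 : ∀ s : Finset (Fin 4), s.Nonempty → (P2.filter (fun A => s ⊆ A)).card ≤ 3 := by decide

lemma g1 : ∀ s : Finset (Fin 4), 2 ≤ s.card → (P2.filter (fun A => s ⊆ A)).card ≤ 1 := by decide

lemma chooseb : ∀ k h : ℕ, h ≤ 2 → k + h ≤ 4 → Nat.choose k 3 + 2*h ≤ 4 := by
  intro k h h1 h2
  have hk : k ≤ 4 := by omega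
  interval_cases k <;> interval_cases h <;> first | (exfalso; omega) | simp [Nat.choose]

variable (ψ : Cell → Fin 8)

def Fib (i : Fin 8) : Finset Cell := univ.filter (fun p => ψ p = i)

lemma mem_Fib {p : Cell} {i : Fin 8} : p ∈ Fib ψ i ↔ ψ p = i := by simp [Fib]

variable (π : Cell → Fin 4)

def LineF (r : Fin 4) : Finset Cell := univ.filter (fun p => π p = r)

lemma mem_LineF {p : Cell} {r : Fin 4} : p ∈ LineF π r ↔ π p = r := by simp [LineF]

def HL (r : Fin 4) : Finset (Fin 8) := univ.filter (fun i => Fib ψ i ⊆ LineF π r)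

def HAll : Finset (Fin 8) := univ.filter (fun i => ∃ r, Fib ψ i ⊆ LineF π r)

lemma fib_nonempty (hfib : ∀ i, (Fib ψ i).card = 2) (i : Fin 8) : (Fib ψ i).Nonempty := by
  apply card_pos.mp; rw [hfib i]; norm_num

lemma fib_disjoint {i j : Fin 8} (hij : i ≠ j) : Disjoint (Fib ψ i) (Fib ψ j) := by
  rw [Finset.disjoint_left]
  intro p hp hq
  exact hij ((mem_Fib ψ).mp hp ▸ (mem_Fib ψ).mp hq ▸ rfl)

lemma line_bound (hfib : ∀ i, (Fib ψ i).card = 2) (hπ : ∀ r, (LineF π r).card = 4) (r : Fin 4) :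
    Nat.choose ((LineF π r).image ψ).card 3 + 2 * (HL ψ π r).card ≤ 4 := by
  set t := (LineF π r).image ψ with ht
  set Hr := HL ψ π r with hHr
  have hsub : Hr ⊆ t := by
    intro i hi
    have hFi : Fib ψ i ⊆ LineF π r := (mem_filter.mp hi).2
    obtain ⟨p, hp⟩ := fib_nonempty ψ hfib i
    exact mem_image.mpr ⟨p, hFi hp, (mem_Fib ψ).mp hp⟩
  have key : (LineF π r).card = ∑ i ∈ t, ((LineF π r).filter (fun p => ψ p = i)).card :=
    card_eq_sum_card_fiberwise (fun p hp => mem_image_of_mem ψ hp)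
  have hHfull : ∀ i ∈ Hr, ((LineF π r).filter (fun p => ψ p = i)).card = 2 := by
    intro i hi
    have hFi : Fib ψ i ⊆ LineF π r := (mem_filter.mp hi).2
    have heq : (LineF π r).filter (fun p => ψ p = i) = Fib ψ i := by
      ext p
      constructor
      · intro hp; exact (mem_Fib ψ).mpr (mem_filter.mp hp).2
      · intro hp; exact mem_filter.mpr ⟨hFi hp, (mem_Fib ψ).mp hp⟩
    rw [heq]; exact hfib i
  have hsum : ∑ i ∈ t, ((LineF π r).filter (fun p => ψ p = i)).card
      = ∑ i ∈ Hr, ((LineF π r).filter (fun p => ψ p = i)).card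
        + ∑ i ∈ t \ Hr, ((LineF π r).filter (fun p => ψ p = i)).card := by
    rw [← Finset.sum_union disjoint_sdiff, union_sdiff_of_subset hsub]
  have hsumH : ∑ i ∈ Hr, ((LineF π r).filter (fun p => ψ p = i)).card = 2 * Hr.card := by
    rw [sum_congr rfl hHfull, sum_const, smul_eq_mul, mul_comm]
  have hsumD : (t \ Hr).card ≤ ∑ i ∈ t \ Hr, ((LineF π r).filter (fun p => ψ p = i)).card := by
    calc (t \ Hr).card = (t \ Hr).card • 1 := by simp
    _ ≤ _ := by
      apply Finset.card_nsmul_le_sum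
      intro i hi
      have hit : i ∈ t := (mem_sdiff.mp hi).1
      obtain ⟨p, hp, hpi⟩ := mem_image.mp hit
      exact card_pos.mpr ⟨p, mem_filter.mpr ⟨hp, hpi⟩⟩
  have hcardle : t.card ≤ Hr.card + (t \ Hr).card := by
    calc t.card = (Hr ∪ (t \ Hr)).card := by rw [union_sdiff_of_subset hsub]
    _ ≤ _ := card_union_le _ _
  have hHr2 : Hr.card ≤ 2 := by
    have hdisj : ∀ i ∈ Hr, ∀ j ∈ Hr, i ≠ j → Disjoint (Fib ψ i) (Fib ψ j) :=
      fun i _ j _ hij => fib_disjoint ψ hij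
    have hbu : (Hr.biUnion (Fib ψ)).card = ∑ i ∈ Hr, (Fib ψ i).card := card_biUnion hdisj
    have hsubL : Hr.biUnion (Fib ψ) ⊆ LineF π r :=
      biUnion_subset.mpr (fun i hi => (mem_filter.mp hi).2)
    have h1 : ∑ i ∈ Hr, (Fib ψ i).card = 2 * Hr.card := by
      rw [sum_congr rfl (fun i _ => hfib i), sum_const, smul_eq_mul, mul_comm]
    have h2 : (Hr.biUnion (Fib ψ)).card ≤ 4 := by
      calc (Hr.biUnion (Fib ψ)).card ≤ (LineF π r).card := card_le_card hsubL
      _ = 4 := hπ r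
    omega
  have h4 : (LineF π r).card = 4 := hπ r
  have : t.card + Hr.card ≤ 4 := by omega
  exact chooseb t.card Hr.card hHr2 this

lemma HAll_card (hfib : ∀ i, (Fib ψ i).card = 2) :
    (HAll ψ π).card = ∑ r, (HL ψ π r).card := by
  have heq : HAll ψ π = (univ : Finset (Fin 4)).biUnion (HL ψ π) := by
    ext i; simp [HAll, HL, mem_biUnion]
  rw [heq]
  apply card_biUnion
  intro r _ r' _ hrr
  show Disjoint (HL ψ π r) (HL ψ π r')
  rw [Finset.disjoint_left]
  intro i hi hi'
  obtain ⟨p, hp⟩ := fib_nonempty ψ hfib i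
  have h1 := (mem_LineF π).mp ((mem_filter.mp hi).2 hp)
  have h2 := (mem_LineF π).mp ((mem_filter.mp hi').2 hp)
  exact hrr (h1 ▸ h2 ▸ rfl)

lemma LB_bound (hfib : ∀ i, (Fib ψ i).card = 2) (hπ : ∀ r, (LineF π r).card = 4) :
    ((univ : Finset (Fin 4)).biUnion
      (fun r => powersetCard 3 ((LineF π r).image ψ))).card + 2 * (HAll ψ π).card ≤ 16 := by
  have h1 : ((univ : Finset (Fin 4)).biUnion
      (fun r => powersetCard 3 ((LineF π r).image ψ))).card
      ≤ ∑ r, (powersetCard 3 ((LineF π r).image ψ)).card := card_biUnion_le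
  have h3 : ∑ r : Fin 4, Nat.choose ((LineF π r).image ψ).card 3
      + ∑ r : Fin 4, 2 * (HL ψ π r).card ≤ 16 := by
    rw [← sum_add_distrib]
    calc ∑ r : Fin 4, (Nat.choose ((LineF π r).image ψ).card 3 + 2 * (HL ψ π r).card)
        ≤ ∑ _r : Fin 4, 4 := sum_le_sum (fun r _ => line_bound ψ π hfib hπ r)
    _ = 16 := by simp
  have h4 : ∑ r : Fin 4, (powersetCard 3 ((LineF π r).image ψ)).card
      = ∑ r : Fin 4, Nat.choose ((LineF π r).image ψ).card 3 :=
    sum_congr rfl (fun r _ => card_powersetCard 3 _)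
  have h5 : 2 * (HAll ψ π).card = ∑ r : Fin 4, 2 * (HL ψ π r).card := by
    rw [HAll_card ψ π hfib, mul_sum]
  omega

-- === new part ===

def rowsOf (i : Fin 8) : Finset (Fin 4) := (Fib ψ i).image Prod.fst
def colsOf (i : Fin 8) : Finset (Fin 4) := (Fib ψ i).image Prod.snd

def fset (i : Fin 8) : Finset (Finset (Fin 4) × Finset (Fin 4)) :=
  (P2.filter (fun A => rowsOf ψ i ⊆ A)) ×ˢ (P2.filter (fun B => colsOf ψ i ⊆ B))

lemma pair_rowsOf {i : Fin 8} {p q : Cell} (h : Fib ψ i = {p, q}) :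
    rowsOf ψ i = {p.1, q.1} := by
  rw [rowsOf, h, image_insert, image_singleton]

lemma pair_colsOf {i : Fin 8} {p q : Cell} (h : Fib ψ i = {p, q}) :
    colsOf ψ i = {p.2, q.2} := by
  rw [colsOf, h, image_insert, image_singleton]

lemma eq_fst_of_H {i : Fin 8} {p q : Cell} (h : Fib ψ i = {p, q})
    (hH : i ∈ HAll ψ Prod.fst) : p.1 = q.1 := by
  obtain ⟨r, hr⟩ := (mem_filter.mp hH).2
  have hp : p ∈ Fib ψ i := by rw [h]; exact mem_insert_self _ _
  have hq : q ∈ Fib ψ i := by rw [h]; exact mem_insert_of_mem (mem_singleton_self _)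
  have h1 := (mem_LineF Prod.fst).mp (hr hp)
  have h2 := (mem_LineF Prod.fst).mp (hr hq)
  rw [h1, h2]

lemma eq_snd_of_V {i : Fin 8} {p q : Cell} (h : Fib ψ i = {p, q})
    (hV : i ∈ HAll ψ Prod.snd) : p.2 = q.2 := by
  obtain ⟨c, hc⟩ := (mem_filter.mp hV).2
  have hp : p ∈ Fib ψ i := by rw [h]; exact mem_insert_self _ _
  have hq : q ∈ Fib ψ i := by rw [h]; exact mem_insert_of_mem (mem_singleton_self _)
  have h1 := (mem_LineF Prod.snd).mp (hc hp)
  have h2 := (mem_LineF Prod.snd).mp (hc hq)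
  rw [h1, h2]

lemma mem_H_of_eq_fst {i : Fin 8} {p q : Cell} (h : Fib ψ i = {p, q})
    (he : p.1 = q.1) : i ∈ HAll ψ Prod.fst := by
  refine mem_filter.mpr ⟨mem_univ _, ⟨p.1, ?_⟩⟩
  intro x hx
  rw [h] at hx
  rcases mem_insert.mp hx with rfl | hx
  · exact (mem_LineF Prod.fst).mpr rfl
  · rw [mem_singleton.mp hx]; exact (mem_LineF Prod.fst).mpr he.symm

lemma mem_V_of_eq_snd {i : Fin 8} {p q : Cell} (h : Fib ψ i = {p, q})
    (he : p.2 = q.2) : i ∈ HAll ψ Prod.snd := by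
  refine mem_filter.mpr ⟨mem_univ _, ⟨p.2, ?_⟩⟩
  intro x hx
  rw [h] at hx
  rcases mem_insert.mp hx with rfl | hx
  · exact (mem_LineF Prod.snd).mpr rfl
  · rw [mem_singleton.mp hx]; exact (mem_LineF Prod.snd).mpr he.symm

lemma fset_card_le (hfib : ∀ i, (Fib ψ i).card = 2) (i : Fin 8) :
    (fset ψ i).card ≤ 1 + (if i ∈ HAll ψ Prod.fst then 2 else 0)
      + (if i ∈ HAll ψ Prod.snd then 2 else 0) := by
  obtain ⟨p, q, hpq, hF⟩ := card_eq_two.mp (hfib i)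
  have hrne : (rowsOf ψ i).Nonempty := by
    rw [pair_rowsOf ψ hF]; exact insert_nonempty _ _
  have hcne : (colsOf ψ i).Nonempty := by
    rw [pair_colsOf ψ hF]; exact insert_nonempty _ _
  have hcardeq : (fset ψ i).card
      = (P2.filter (fun A => rowsOf ψ i ⊆ A)).card
        * (P2.filter (fun B => colsOf ψ i ⊆ B)).card := card_product _ _
  by_cases hH : i ∈ HAll ψ Prod.fst
  · -- p.1 = q.1, so p.2 ≠ q.2, cols card 2
    have he := eq_fst_of_H ψ hF hH
    have hne : p.2 ≠ q.2 := fun hc => hpq (Prod.ext he hc)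
    have hc2 : 2 ≤ (colsOf ψ i).card := by
      rw [pair_colsOf ψ hF, card_pair hne]
    have := Nat.mul_le_mul (g3 _ hrne) (g1 _ hc2)
    simp only [if_pos hH]
    omega
  · have hne : p.1 ≠ q.1 := fun hc => hH (mem_H_of_eq_fst ψ hF hc)
    have hr2 : 2 ≤ (rowsOf ψ i).card := by
      rw [pair_rowsOf ψ hF, card_pair hne]
    by_cases hV : i ∈ HAll ψ Prod.snd
    · have := Nat.mul_le_mul (g1 _ hr2) (g3 _ hcne)
      simp only [if_pos hV, if_neg hH]
      omega
    · have hne2 : p.2 ≠ q.2 := fun hc => hV (mem_V_of_eq_snd ψ hF hc)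
      have hc2 : 2 ≤ (colsOf ψ i).card := by
        rw [pair_colsOf ψ hF, card_pair hne2]
      have := Nat.mul_le_mul (g1 _ hr2) (g1 _ hc2)
      simp only [if_neg hH, if_neg hV]
      omega

def RB : Finset (Finset (Fin 8)) :=
  univ.biUnion (fun i => (fset ψ i).image (fun AB => (AB.1 ×ˢ AB.2).image ψ))

lemma RB_card (hfib : ∀ i, (Fib ψ i).card = 2) :
    (RB ψ).card ≤ 8 + 2 * (HAll ψ Prod.fst).card + 2 * (HAll ψ Prod.snd).card := by
  calc (RB ψ).card ≤ ∑ i, ((fset ψ i).image (fun AB => (AB.1 ×ˢ AB.2).image ψ)).card :=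
        card_biUnion_le
  _ ≤ ∑ i, (fset ψ i).card := sum_le_sum (fun i _ => card_image_le)
  _ ≤ ∑ i : Fin 8, (1 + (if i ∈ HAll ψ Prod.fst then 2 else 0)
      + (if i ∈ HAll ψ Prod.snd then 2 else 0)) :=
        sum_le_sum (fun i _ => fset_card_le ψ hfib i)
  _ = 8 + 2 * (HAll ψ Prod.fst).card + 2 * (HAll ψ Prod.snd).card := by
      rw [sum_add_distrib, sum_add_distrib, Finset.sum_ite_mem, Finset.sum_ite_mem,
        univ_inter, univ_inter, sum_const, sum_const, sum_const]
      simp [mul_comm]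

-- === new part ===

def LB (π : Cell → Fin 4) : Finset (Finset (Fin 8)) :=
  (univ : Finset (Fin 4)).biUnion (fun r => powersetCard 3 ((LineF π r).image ψ))

def BadT (s : Finset (Fin 8)) : Prop :=
  (∃ r : Fin 4, ∀ i ∈ s, ∃ p : Cell, ψ p = i ∧ p.1 = r) ∨
  (∃ c : Fin 4, ∀ i ∈ s, ∃ p : Cell, ψ p = i ∧ p.2 = c) ∨
  (∃ a₀ a₁ b₀ b₁ : Fin 4, a₀ ≠ a₁ ∧ b₀ ≠ b₁ ∧
    (∀ p ∈ ({a₀, a₁} ×ˢ {b₀, b₁} : Finset Cell), ψ p ∈ s) ∧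
    (∀ i ∈ s, ∃ p ∈ ({a₀, a₁} ×ˢ {b₀, b₁} : Finset Cell), ψ p = i))

lemma bad_mem (hfib : ∀ i, (Fib ψ i).card = 2) {s : Finset (Fin 8)}
    (hs : s ∈ powersetCard 3 (univ : Finset (Fin 8))) (hbad : BadT ψ s) :
    s ∈ LB ψ Prod.fst ∪ LB ψ Prod.snd ∪ RB ψ := by
  have hcard3 : s.card = 3 := (mem_powersetCard.mp hs).2
  rcases hbad with ⟨r, hr⟩ | ⟨c, hc⟩ | ⟨a₀, a₁, b₀, b₁, ha, hb, hmem, hsur⟩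
  · refine mem_union_left _ (mem_union_left _ (mem_biUnion.mpr ⟨r, mem_univ r, ?_⟩))
    refine mem_powersetCard.mpr ⟨?_, hcard3⟩
    intro i hi
    obtain ⟨p, hψp, hp1⟩ := hr i hi
    exact mem_image.mpr ⟨p, (mem_LineF Prod.fst).mpr hp1, hψp⟩
  · refine mem_union_left _ (mem_union_right _ (mem_biUnion.mpr ⟨c, mem_univ c, ?_⟩))
    refine mem_powersetCard.mpr ⟨?_, hcard3⟩
    intro i hi
    obtain ⟨p, hψp, hp2⟩ := hc i hi
    exact mem_image.mpr ⟨p, (mem_LineF Prod.snd).mpr hp2, hψp⟩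
  · refine mem_union_right _ ?_
    have hR4 : (({a₀, a₁} ×ˢ {b₀, b₁} : Finset Cell)).card = 4 := by
      rw [card_product, card_pair ha, card_pair hb]
    have key : (({a₀, a₁} ×ˢ {b₀, b₁} : Finset Cell)).card
        = ∑ i ∈ s, ((({a₀, a₁} ×ˢ {b₀, b₁} : Finset Cell)).filter (fun p => ψ p = i)).card :=
      card_eq_sum_card_fiberwise hmem
    have hpigeon : ∃ i ∈ s,
        2 ≤ ((({a₀, a₁} ×ˢ {b₀, b₁} : Finset Cell)).filter (fun p => ψ p = i)).card := by
      by_contra hcon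
      push_neg at hcon
      have hle : ∑ i ∈ s, ((({a₀, a₁} ×ˢ {b₀, b₁} : Finset Cell)).filter
          (fun p => ψ p = i)).card ≤ ∑ _i ∈ s, 1 :=
        sum_le_sum (fun i hi => by have := hcon i hi; omega)
      rw [sum_const, hcard3, smul_eq_mul] at hle
      omega
    obtain ⟨i, his, hi2⟩ := hpigeon
    have hfilt : (({a₀, a₁} ×ˢ {b₀, b₁} : Finset Cell)).filter (fun p => ψ p = i) ⊆ Fib ψ i :=
      fun p hp => (mem_Fib ψ).mpr (mem_filter.mp hp).2
    have heqf : (({a₀, a₁} ×ˢ {b₀, b₁} : Finset Cell)).filter (fun p => ψ p = i) = Fib ψ i :=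
      eq_of_subset_of_card_le hfilt (by rw [hfib i]; exact hi2)
    have hFsub : Fib ψ i ⊆ ({a₀, a₁} ×ˢ {b₀, b₁} : Finset Cell) := by
      rw [← heqf]; exact filter_subset _ _
    refine mem_biUnion.mpr ⟨i, mem_univ i, mem_image.mpr ⟨(({a₀, a₁}, {b₀, b₁})), ?_, ?_⟩⟩
    · refine mem_product.mpr ⟨mem_filter.mpr ⟨?_, ?_⟩, mem_filter.mpr ⟨?_, ?_⟩⟩
      · exact mem_powersetCard.mpr ⟨subset_univ _, card_pair ha⟩
      · intro x hx
        obtain ⟨p, hpF, rfl⟩ := mem_image.mp hx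
        exact (mem_product.mp (hFsub hpF)).1
      · exact mem_powersetCard.mpr ⟨subset_univ _, card_pair hb⟩
      · intro x hx
        obtain ⟨p, hpF, rfl⟩ := mem_image.mp hx
        exact (mem_product.mp (hFsub hpF)).2
    · apply Subset.antisymm
      · intro j hj
        obtain ⟨p, hp, rfl⟩ := mem_image.mp hj
        exact hmem p hp
      · intro j hj
        obtain ⟨p, hp, hψp⟩ := hsur j hj
        exact mem_image.mpr ⟨p, hp, hψp⟩

lemma exists_good (hfib : ∀ i, (Fib ψ i).card = 2) :
    ∃ s ∈ powersetCard 3 (univ : Finset (Fin 8)), ¬ BadT ψ s := by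
  by_contra hcon
  push_neg at hcon
  have hsub : powersetCard 3 (univ : Finset (Fin 8)) ⊆ LB ψ Prod.fst ∪ LB ψ Prod.snd ∪ RB ψ :=
    fun s hs => bad_mem ψ hfib hs (hcon s hs)
  have h56 : (powersetCard 3 (univ : Finset (Fin 8))).card = 56 := by
    rw [card_powersetCard]; decide
  have hπ1 : ∀ r, (LineF Prod.fst r).card = 4 := by decide
  have hπ2 : ∀ r, (LineF Prod.snd r).card = 4 := by decide
  have hLB1 := LB_bound ψ Prod.fst hfib hπ1
  have hLB2 := LB_bound ψ Prod.snd hfib hπ2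
  have hRB := RB_card ψ hfib
  have hch : (powersetCard 3 (univ : Finset (Fin 8))).card
      ≤ (LB ψ Prod.fst ∪ LB ψ Prod.snd ∪ RB ψ).card := card_le_card hsub
  have hu1 : (LB ψ Prod.fst ∪ LB ψ Prod.snd ∪ RB ψ).card
      ≤ (LB ψ Prod.fst).card + (LB ψ Prod.snd).card + (RB ψ).card :=
    le_trans (card_union_le _ _) (by have := card_union_le (LB ψ Prod.fst) (LB ψ Prod.snd); omega)
  have e1 : (LB ψ Prod.fst).card = ((univ : Finset (Fin 4)).biUnion
      (fun r => powersetCard 3 ((LineF Prod.fst r).image ψ))).card := rfl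
  have e2 : (LB ψ Prod.snd).card = ((univ : Finset (Fin 4)).biUnion
      (fun r => powersetCard 3 ((LineF Prod.snd r).image ψ))).card := rfl
  omega

end Stmt5Aux
theorem stmt5 (ψ : Fin 4 × Fin 4 → Fin 8)
    (hfib : ∀ i : Fin 8, Set.ncard {p | ψ p = i} = 2) :
    ∃ i₀ i₁ i₂ : Fin 8, i₀ ≠ i₁ ∧ i₀ ≠ i₂ ∧ i₁ ≠ i₂ ∧
      (¬ ∃ p₀ p₁ p₂ : Fin 4 × Fin 4, ψ p₀ = i₀ ∧ ψ p₁ = i₁ ∧ ψ p₂ = i₂ ∧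
        ((p₀.1 = p₁.1 ∧ p₁.1 = p₂.1) ∨ (p₀.2 = p₁.2 ∧ p₁.2 = p₂.2))) ∧
      (¬ ∃ (a₀ a₁ b₀ b₁ : Fin 4), a₀ ≠ a₁ ∧ b₀ ≠ b₁ ∧
        (∀ p ∈ ({(a₀, b₀), (a₀, b₁), (a₁, b₀), (a₁, b₁)} : Set (Fin 4 × Fin 4)),
          ψ p = i₀ ∨ ψ p = i₁ ∨ ψ p = i₂) ∧
        (∀ j ∈ ({i₀, i₁, i₂} : Set (Fin 8)),
          ∃ p ∈ ({(a₀, b₀), (a₀, b₁), (a₁, b₀), (a₁, b₁)} : Set (Fin 4 × Fin 4)),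
            ψ p = j)) := by
  classical
  have hfib' : ∀ i, (Stmt5Aux.Fib ψ i).card = 2 := by
    intro i
    have h := hfib i
    rw [Set.ncard_eq_toFinset_card'] at h
    simpa [Stmt5Aux.Fib, Set.toFinset_setOf] using h
  obtain ⟨s, hs, hgood⟩ := Stmt5Aux.exists_good ψ hfib'
  have hcard3 : s.card = 3 := (Finset.mem_powersetCard.mp hs).2
  obtain ⟨i₀, i₁, i₂, h01, h02, h12, rfl⟩ := Finset.card_eq_three.mp hcard3
  refine ⟨i₀, i₁, i₂, h01, h02, h12, ?_, ?_⟩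
  · rintro ⟨p₀, p₁, p₂, h0, h1, h2, hcase | hcase⟩
    · refine hgood (Or.inl ⟨p₀.1, ?_⟩)
      intro i hi
      simp only [Finset.mem_insert, Finset.mem_singleton] at hi
      rcases hi with rfl | rfl | rfl
      · exact ⟨p₀, h0, rfl⟩
      · exact ⟨p₁, h1, hcase.1.symm⟩
      · exact ⟨p₂, h2, (hcase.1.trans hcase.2).symm⟩
    · refine hgood (Or.inr (Or.inl ⟨p₀.2, ?_⟩))
      intro i hi
      simp only [Finset.mem_insert, Finset.mem_singleton] at hi
      rcases hi with rfl | rfl | rfl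
      · exact ⟨p₀, h0, rfl⟩
      · exact ⟨p₁, h1, hcase.1.symm⟩
      · exact ⟨p₂, h2, (hcase.1.trans hcase.2).symm⟩
  · rintro ⟨a₀, a₁, b₀, b₁, ha, hb, hmem, hsur⟩
    refine hgood (Or.inr (Or.inr ⟨a₀, a₁, b₀, b₁, ha, hb, ?_, ?_⟩))
    · intro p hp
      have hp' : p = (a₀, b₀) ∨ p = (a₀, b₁) ∨ p = (a₁, b₀) ∨ p = (a₁, b₁) := by
        have h := Finset.mem_product.mp hp
        simp only [Finset.mem_insert, Finset.mem_singleton] at h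
        obtain ⟨x, y⟩ := p
        rcases h with ⟨h1 | h1, h2 | h2⟩ <;> subst h1 <;> subst h2 <;> simp
      have := hmem p (by simpa [Set.mem_insert_iff] using hp')
      simpa [Finset.mem_insert, Finset.mem_singleton] using this
    · intro i hi
      simp only [Finset.mem_insert, Finset.mem_singleton] at hi
      have hj : i ∈ ({i₀, i₁, i₂} : Set (Fin 8)) := by
        simpa [Set.mem_insert_iff] using hi
      obtain ⟨p, hp, hψp⟩ := hsur i hj
      refine ⟨p, ?_, hψp⟩
      simp only [Set.mem_insert_iff, Set.mem_singleton_iff] at hp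
      rcases hp with rfl | rfl | rfl | rfl <;>
        simp [Finset.mem_product]
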